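/- The reversed expectile loss L_rev^τ(u) = |τ − 𝟙(u > 0)|·u², applied as V ↦ argmin_V E[L_rev^τ(Q − V)] with τ ∈ (0.5, 1), yields the (1−τ)-expectile of the distribution of Q, and as τ → 1 this expectile converges to the essential infimum of Q when Q is bounded. -/

import Mathlib

open MeasureTheory

/-- The reversed loss and the standard `(1-τ)`-asymmetric loss agree pointwise. -/
lemma loss_eq_aux (τ v q : ℝ) :
    |(1 - τ) - (if q - v < 0 then (1 : ℝ) else 0)| * (q - v) ^ 2
      = |τ - (if q - v > 0 then (1 : ℝ) else 0)| * (q - v) ^ 2 := by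
  rcases lt_trichotomy (q - v) 0 with h | h | h
  · rw [if_pos h, if_neg (by linarith)]
    have h1 : (1 - τ) - 1 = -τ := by ring
    rw [h1, abs_neg, sub_zero]
  · simp [h]
  · rw [if_neg (by linarith), if_pos h]
    have h1 : (1 - τ) - 0 = -(τ - 1) := by ring
    rw [h1, abs_neg]

lemma integrable_loss {Ω : Type*} [MeasurableSpace Ω] (μ : Measure Ω)
    [IsProbabilityMeasure μ] (Q : Ω → ℝ) (hmeas : Measurable Q) (M : ℝ)
    (hbdd : ∀ ω, |Q ω| ≤ M) (τ v : ℝ) :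
    Integrable (fun ω => |τ - (if Q ω - v > 0 then (1 : ℝ) else 0)| * (Q ω - v) ^ 2) μ := by
  have hm : Measurable fun ω => |τ - (if Q ω - v > 0 then (1 : ℝ) else 0)| * (Q ω - v) ^ 2 := by
    apply Measurable.mul
    · apply Measurable.abs
      apply Measurable.sub measurable_const
      exact Measurable.ite (measurableSet_lt measurable_const (hmeas.sub measurable_const))
        measurable_const measurable_const
    · exact ((hmeas.sub measurable_const).pow measurable_const)
  refine ⟨hm.aestronglyMeasurable, HasFiniteIntegral.of_bounded
    (C := (|τ| + 1) * (M + |v|) ^ 2) (ae_of_all μ fun ω => ?_)⟩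
  have h1 : |τ - (if Q ω - v > 0 then (1 : ℝ) else 0)| ≤ |τ| + 1 := by
    split_ifs <;> [skip; simp] <;>
      calc |τ - 1| ≤ |τ| + |(1 : ℝ)| := abs_sub _ _
        _ = |τ| + 1 := by norm_num
  have h2 : (Q ω - v) ^ 2 ≤ (M + |v|) ^ 2 := by
    have := hbdd ω
    have habs : |Q ω - v| ≤ M + |v| := by
      calc |Q ω - v| ≤ |Q ω| + |v| := abs_sub _ _
        _ ≤ M + |v| := by linarith
    calc (Q ω - v) ^ 2 = |Q ω - v| ^ 2 := (sq_abs _).symm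
      _ ≤ (M + |v|) ^ 2 := by
          exact pow_le_pow_left₀ (abs_nonneg _) habs 2
  have h3 : (0:ℝ) ≤ (Q ω - v) ^ 2 := sq_nonneg _
  have h4 : (0:ℝ) ≤ |τ - (if Q ω - v > 0 then (1 : ℝ) else 0)| := abs_nonneg _
  rw [Real.norm_eq_abs, abs_of_nonneg (mul_nonneg h4 h3)]
  exact mul_le_mul h1 h2 h3 (by positivity)

set_option maxHeartbeats 1000000 in
theorem stmt17 {Ω : Type*} [MeasurableSpace Ω] (μ : Measure Ω) [IsProbabilityMeasure μ]
    (Q : Ω → ℝ) (hmeas : Measurable Q) (M : ℝ) (hbdd : ∀ ω, |Q ω| ≤ M)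
    (m : ℝ → ℝ)
    (hmin : ∀ τ ∈ Set.Ioo (1 / 2 : ℝ) 1, ∀ v : ℝ,
      (∫ ω, |τ - (if Q ω - m τ > 0 then (1 : ℝ) else 0)| * (Q ω - m τ) ^ 2 ∂μ)
        ≤ ∫ ω, |τ - (if Q ω - v > 0 then (1 : ℝ) else 0)| * (Q ω - v) ^ 2 ∂μ) :
    (∀ τ ∈ Set.Ioo (1 / 2 : ℝ) 1, ∀ v : ℝ,
      (∫ ω, |(1 - τ) - (if Q ω - m τ < 0 then (1 : ℝ) else 0)| * (Q ω - m τ) ^ 2 ∂μ)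
        ≤ ∫ ω, |(1 - τ) - (if Q ω - v < 0 then (1 : ℝ) else 0)| * (Q ω - v) ^ 2 ∂μ) ∧
    Filter.Tendsto m (nhdsWithin 1 (Set.Ioo (1 / 2 : ℝ) 1)) (nhds (essInf Q μ)) := by
  constructor
  · intro τ hτ v
    have e1 : ∀ w : ℝ, (fun ω => |(1 - τ) - (if Q ω - w < 0 then (1 : ℝ) else 0)| * (Q ω - w) ^ 2)
        = fun ω => |τ - (if Q ω - w > 0 then (1 : ℝ) else 0)| * (Q ω - w) ^ 2 := by
      intro w; funext ω; exact loss_eq_aux τ w (Q ω)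
    rw [show (∫ ω, |(1 - τ) - (if Q ω - m τ < 0 then (1 : ℝ) else 0)| * (Q ω - m τ) ^ 2 ∂μ)
        = ∫ ω, |τ - (if Q ω - m τ > 0 then (1 : ℝ) else 0)| * (Q ω - m τ) ^ 2 ∂μ from by
        rw [e1 (m τ)],
      show (∫ ω, |(1 - τ) - (if Q ω - v < 0 then (1 : ℝ) else 0)| * (Q ω - v) ^ 2 ∂μ)
        = ∫ ω, |τ - (if Q ω - v > 0 then (1 : ℝ) else 0)| * (Q ω - v) ^ 2 ∂μ from by rw [e1 v]]
    exact hmin τ hτ v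
  · set a := essInf Q μ with ha
    have hne : Nonempty Ω := μ.nonempty_of_neZero
    have hMnn : (0:ℝ) ≤ M := le_trans (abs_nonneg _) (hbdd (Classical.arbitrary Ω))
    have hbQ : Filter.IsBoundedUnder (· ≥ ·) (ae μ) Q :=
      ⟨-M, ae_of_all μ fun ω => (abs_le.mp (hbdd ω)).1⟩
    have haeQ : ∀ᵐ ω ∂μ, a ≤ Q ω := ae_essInf_le hbQ
    have hnebot : (ae μ).NeBot := ae_neBot.mpr (NeZero.ne μ)
    have hcb : Filter.IsCoboundedUnder (· ≥ ·) (ae μ) Q :=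
      Filter.IsBoundedUnder.isCoboundedUnder_ge
        ⟨M, ae_of_all μ fun ω => (abs_le.mp (hbdd ω)).2⟩
    have hle_essInf : ∀ c : ℝ, (∀ᵐ ω ∂μ, c ≤ Q ω) → c ≤ a := fun c hc =>
      Filter.le_liminf_of_le hcb hc
    have haM : |a| ≤ M := by
      rw [abs_le]
      constructor
      · exact hle_essInf (-M) (ae_of_all μ fun ω => (abs_le.mp (hbdd ω)).1)
      · obtain ⟨ω, hω⟩ := haeQ.exists
        exact le_trans hω (abs_le.mp (hbdd ω)).2
    have hint : ∀ τ v : ℝ,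
        Integrable (fun ω => |τ - (if Q ω - v > 0 then (1 : ℝ) else 0)| * (Q ω - v) ^ 2) μ :=
      integrable_loss μ Q hmeas M hbdd
    -- lower bound: a ≤ m τ
    have hlow : ∀ τ ∈ Set.Ioo (1/2 : ℝ) 1, a ≤ m τ := by
      intro τ hτ
      by_contra hlt
      push_neg at hlt
      have key : ∀ᵐ ω ∂μ,
          |τ - (if Q ω - a > 0 then (1:ℝ) else 0)| * (Q ω - a) ^ 2 + (1 - τ) * (a - m τ) ^ 2
            ≤ |τ - (if Q ω - m τ > 0 then (1:ℝ) else 0)| * (Q ω - m τ) ^ 2 := by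
        filter_upwards [haeQ] with ω hω
        have h1 : Q ω - m τ > 0 := by linarith
        rw [if_pos h1]
        have habs : |τ - 1| = 1 - τ := by
          rw [abs_of_nonpos (by linarith [hτ.2])]; ring
        rw [habs]
        by_cases h2 : Q ω - a > 0
        · rw [if_pos h2]
          have habs2 : |τ - 1| = 1 - τ := habs
          rw [habs2]
          nlinarith [hτ.2, mul_nonneg (by linarith [hτ.2] : (0:ℝ) ≤ 1 - τ)
            (mul_pos h2 (show (0:ℝ) < a - m τ by linarith)).le]
        · rw [if_neg h2]
          have hQa : Q ω = a := le_antisymm (by linarith [not_lt.mp (by simpa using h2)]) hω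
          rw [hQa]
          nlinarith [hτ.2]
      have hI : (∫ ω, |τ - (if Q ω - a > 0 then (1:ℝ) else 0)| * (Q ω - a) ^ 2 ∂μ)
            + (1 - τ) * (a - m τ) ^ 2
          ≤ ∫ ω, |τ - (if Q ω - m τ > 0 then (1:ℝ) else 0)| * (Q ω - m τ) ^ 2 ∂μ := by
        have := integral_mono_ae ((hint τ a).add (integrable_const ((1 - τ) * (a - m τ) ^ 2)))
          (hint τ (m τ)) key
        simp only [Pi.add_apply] at this
        rwa [integral_add (hint τ a) (integrable_const _), integral_const,
          probReal_univ, one_smul] at this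
      have hpos : 0 < (1 - τ) * (a - m τ) ^ 2 := by
        exact mul_pos (by linarith [hτ.2]) (pow_pos (by linarith) 2)
      linarith [hmin τ hτ a]
    -- upper bound
    have hupp : ∀ ε : ℝ, 0 < ε → ∃ τ₀ ∈ Set.Ico (1/2 : ℝ) 1,
        ∀ τ ∈ Set.Ioo (1/2 : ℝ) 1, τ₀ < τ → m τ < a + ε := by
      intro ε hε
      set S := {ω | Q ω < a + ε / 2} with hS
      have hSm : MeasurableSet S := measurableSet_lt hmeas measurable_const
      set p := (μ S).toReal with hp
      have hppos : 0 < p := by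
        rw [hp, ENNReal.toReal_pos_iff]
        refine ⟨?_, lt_of_le_of_lt (measure_mono (Set.subset_univ S)) (by simp)⟩
        by_contra h0
        push_neg at h0
        simp only [nonpos_iff_eq_zero] at h0
        have : ∀ᵐ ω ∂μ, a + ε / 2 ≤ Q ω := by
          rw [ae_iff]
          convert h0 using 2
          ext ω; simp [hS, not_le]
        have h2 : a + ε / 2 ≤ a := hle_essInf _ this
        linarith
      set δ := (ε ^ 2 * p / 8) / (4 * M ^ 2 + 1) with hδ
      have hδpos : 0 < δ := by
        apply div_pos (by positivity) (by positivity)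
      refine ⟨max (1/2) (1 - δ / 2), ⟨le_max_left _ _, ?_⟩, ?_⟩
      · apply max_lt (by norm_num) (by linarith)
      intro τ hτ hτ₀
      by_contra hge
      push_neg at hge
      have hτδ : 1 - τ < δ := by
        have := lt_of_le_of_lt (le_max_right (1/2 : ℝ) (1 - δ / 2)) hτ₀
        linarith
      -- lower bound on F(m τ)
      have hlb : τ * (ε ^ 2 / 4) * p
          ≤ ∫ ω, |τ - (if Q ω - m τ > 0 then (1:ℝ) else 0)| * (Q ω - m τ) ^ 2 ∂μ := by
        have hptw : ∀ ω, S.indicator (fun _ => τ * (ε ^ 2 / 4)) ω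
            ≤ |τ - (if Q ω - m τ > 0 then (1:ℝ) else 0)| * (Q ω - m τ) ^ 2 := by
          intro ω
          by_cases hω : ω ∈ S
          · rw [Set.indicator_of_mem hω]
            have hQω : Q ω < a + ε / 2 := hω
            have h1 : Q ω - m τ ≤ -(ε / 2) := by linarith
            have h2 : ¬ (Q ω - m τ > 0) := by linarith
            rw [if_neg h2, sub_zero, abs_of_pos (by linarith [hτ.1] : (0:ℝ) < τ)]
            have h3 : (ε / 2) ^ 2 ≤ (Q ω - m τ) ^ 2 := by nlinarith
            nlinarith [hτ.1]
          · rw [Set.indicator_of_notMem hω]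
            positivity
        have := integral_mono ((integrable_const (τ * (ε ^ 2 / 4))).indicator hSm)
          (hint τ (m τ)) hptw
        rwa [integral_indicator_const _ hSm, smul_eq_mul, mul_comm] at this
      -- upper bound on F(a)
      have hub : (∫ ω, |τ - (if Q ω - a > 0 then (1:ℝ) else 0)| * (Q ω - a) ^ 2 ∂μ)
          ≤ (1 - τ) * (4 * M ^ 2) := by
        have hptw : ∀ᵐ ω ∂μ, |τ - (if Q ω - a > 0 then (1:ℝ) else 0)| * (Q ω - a) ^ 2
            ≤ (1 - τ) * (4 * M ^ 2) := by
          filter_upwards [haeQ] with ω hω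
          have hQM := abs_le.mp (hbdd ω)
          have haM' := abs_le.mp haM
          by_cases h2 : Q ω - a > 0
          · rw [if_pos h2, abs_of_nonpos (by linarith [hτ.2]), neg_sub]
            have : (Q ω - a) ^ 2 ≤ 4 * M ^ 2 := by nlinarith
            nlinarith [hτ.2]
          · have hQa : Q ω = a := le_antisymm (by linarith [not_lt.mp h2]) hω
            rw [hQa]
            have : (0:ℝ) ≤ (1 - τ) * (4 * M ^ 2) := by
              apply mul_nonneg (by linarith [hτ.2]); positivity
            simpa using this
        have := integral_mono_ae (hint τ a) (integrable_const _) hptw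
        rwa [integral_const, probReal_univ, one_smul] at this
      have hchain := le_trans (le_trans hlb (hmin τ hτ a)) hub
      have hfinal : (1 - τ) * (4 * M ^ 2) < τ * (ε ^ 2 / 4) * p := by
        have h1 : (1 - τ) * (4 * M ^ 2) < δ * (4 * M ^ 2 + 1) := by
          have h2 : (0:ℝ) ≤ 4 * M ^ 2 := by positivity
          nlinarith
        have h3 : δ * (4 * M ^ 2 + 1) = ε ^ 2 * p / 8 := by
          rw [hδ]; field_simp
        have h4 : ε ^ 2 * p / 8 ≤ τ * (ε ^ 2 / 4) * p := by
          nlinarith [mul_nonneg (mul_nonneg (by linarith [hτ.1] : (0:ℝ) ≤ τ - 1/2)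
            (by positivity : (0:ℝ) ≤ ε ^ 2 / 4)) hppos.le]
        linarith
      linarith
    -- conclude tendsto
    rw [Metric.tendsto_nhds]
    intro ε hε
    obtain ⟨τ₀, hτ₀, hτ₀'⟩ := hupp ε hε
    have h1 : ∀ᶠ τ in nhdsWithin 1 (Set.Ioo (1/2 : ℝ) 1), τ ∈ Set.Ioo (1/2 : ℝ) 1 :=
      eventually_mem_nhdsWithin
    have h2 : ∀ᶠ τ in nhdsWithin 1 (Set.Ioo (1/2 : ℝ) 1), τ₀ < τ :=
      nhdsWithin_le_nhds (eventually_gt_nhds hτ₀.2)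
    filter_upwards [h1, h2] with τ hτ hτgt
    have hl := hlow τ (by simpa using hτ)
    have hu := hτ₀' τ (by simpa using hτ) hτgt
    rw [Real.dist_eq, abs_of_nonneg (by linarith)]
    linarith
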